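/- Let f : ℝⁿ → ℝ be C²-smooth and q ∈ ℝ such that T_q(f) is convex, q is a regular value of f, and H_f(x) is positive definite for all x with f(x) > q. Then the restriction of ∇f to the open set f⁻¹((q, +∞)) is injective. -/

import Mathlib

open Set Filter Topology

set_option maxHeartbeats 1000000 in
/-- If `f : ℝⁿ → ℝ` is `C²`, `T_q(f)` is convex, `q` is a regular value of `f`,
and the Hessian of `f` is positive definite at every point `x` with `f x > q`,
then `∇f` is injective on `f⁻¹((q, +∞))`. -/
theorem stmt_14 (n : ℕ) (f : EuclideanSpace ℝ (Fin n) → ℝ) (q : ℝ)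
    (hf : ContDiff ℝ 2 f)
    (hconv : ConvexOn ℝ Set.univ (fun x => max q (f x)))
    (hreg : ∀ x, f x = q → gradient f x ≠ 0)
    (hhess : ∀ x, q < f x → ∀ v : EuclideanSpace ℝ (Fin n), v ≠ 0 →
      0 < fderiv ℝ (fderiv ℝ f) x v v) :
    Set.InjOn (gradient f) {x | q < f x} := by
  intro a ha b hb hg
  by_contra hne
  have hdf : Differentiable ℝ f := hf.differentiable (by norm_num)
  have hG : Differentiable ℝ (fderiv ℝ f) :=
    (hf.fderiv_right (m := 1) (by norm_num)).differentiable one_ne_zero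
  have hfd : fderiv ℝ f b = fderiv ℝ f a := by
    have := congrArg (InnerProductSpace.toDual ℝ (EuclideanSpace ℝ (Fin n))) hg
    simpa [gradient] using this.symm
  set v := b - a with hv_def
  have hv : v ≠ 0 := sub_ne_zero.mpr (Ne.symm hne)
  set c : ℝ → EuclideanSpace ℝ (Fin n) := fun t => t • v + a with hc_def
  have hc0 : c 0 = a := by simp [hc_def]
  have hc1 : c 1 = b := by simp [hc_def, hv_def]
  have hcd : ∀ t : ℝ, HasDerivAt c v t := fun t => by
    simpa [hc_def] using ((hasDerivAt_id t).smul_const v).add_const a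
  set L : ℝ := fderiv ℝ f a v with hL_def
  set ψ : ℝ → ℝ := fun t => max q (f (c t)) with hψ_def
  have hψconv : ConvexOn ℝ univ ψ := by
    have h := hconv.comp_affineMap (AffineMap.lineMap a b)
    rw [Set.preimage_univ] at h
    have heq : ψ = (fun x => max q (f x)) ∘ (AffineMap.lineMap a b) := by
      funext t
      show max q (f (t • (b - a) + a)) = max q (f (AffineMap.lineMap a b t))
      rw [AffineMap.lineMap_apply_module]
      have harg : t • (b - a) + a = (1 - t) • a + t • b := by module
      rw [harg]
    rwa [heq]
  -- derivative of f along the line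
  have hφd : ∀ t : ℝ, HasDerivAt (fun s => f (c s)) (fderiv ℝ f (c t) v) t := fun t =>
    (hdf (c t)).hasFDerivAt.comp_hasDerivAt t (hcd t)
  -- the set where f ∘ c > q is open
  have hccont : Continuous c := by fun_prop
  have hS : IsOpen {t : ℝ | q < f (c t)} :=
    isOpen_lt continuous_const (hf.continuous.comp hccont)
  have h0S : (0 : ℝ) ∈ {t : ℝ | q < f (c t)} := by simpa [hc0] using ha
  have h1S : (1 : ℝ) ∈ {t : ℝ | q < f (c t)} := by simpa [hc1] using hb
  have hev : ∀ t ∈ {t : ℝ | q < f (c t)}, ψ =ᶠ[𝓝 t] fun s => f (c s) := by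
    intro t ht
    filter_upwards [hS.mem_nhds ht] with s hs
    exact max_eq_right (le_of_lt hs)
  have hψ0 : HasDerivAt ψ L 0 := by
    have h := hφd 0
    rw [hc0] at h
    exact h.congr_of_eventuallyEq (hev 0 h0S)
  have hψ1 : HasDerivAt ψ L 1 := by
    have h := hφd 1
    rw [hc1, hfd] at h
    exact h.congr_of_eventuallyEq (hev 1 h1S)
  have hψ0v : ψ 0 = f a := by rw [hψ_def]; simp only [hc0]; exact max_eq_right ha.le
  have hψ1v : ψ 1 = f b := by rw [hψ_def]; simp only [hc1]; exact max_eq_right hb.le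
  -- ψ 1 = ψ 0 + L
  have hslope : slope ψ 0 1 = ψ 1 - ψ 0 := by simp [slope_def_field]
  have hub := hψconv.slope_le_of_hasDerivAt (mem_univ (0:ℝ)) (mem_univ 1) one_pos hψ1
  have hlb := hψconv.le_slope_of_hasDerivAt (mem_univ (0:ℝ)) (mem_univ 1) one_pos hψ0
  have hψ1eq : ψ 1 = ψ 0 + L := by rw [hslope] at hub hlb; linarith
  -- choose a small interval
  obtain ⟨ε, hε0, hball⟩ := Metric.isOpen_iff.mp hS 0 h0S
  set δ := min ε 1 with hδ_def
  have hδ0 : 0 < δ := lt_min hε0 one_pos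
  have hUS : ∀ t ∈ Ioo (0:ℝ) δ, q < f (c t) := by
    intro t ht
    have : t ∈ Metric.ball (0:ℝ) ε := by
      rw [Metric.mem_ball, Real.dist_eq, sub_zero, abs_of_pos ht.1]
      exact lt_of_lt_of_le ht.2 (min_le_left _ _)
    exact hball this
  have hUlt1 : ∀ t ∈ Ioo (0:ℝ) δ, t < 1 :=
    fun t ht => lt_of_lt_of_le ht.2 (min_le_right _ _)
  -- ψ is affine on the interval
  have haff : ∀ t ∈ Ioo (0:ℝ) δ, ψ t = ψ 0 + t * L := by
    intro t ht
    have hlow := hψconv.le_slope_of_hasDerivAt (mem_univ (0:ℝ)) (mem_univ t) ht.1 hψ0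
    rw [slope_def_field] at hlow
    have hlow' : ψ 0 + t * L ≤ ψ t := by
      rw [sub_zero, le_div_iff₀ ht.1, mul_comm] at hlow
      linarith
    have h01 : (0:ℝ) ≤ 1 - t := by linarith [hUlt1 t ht]
    have hup := hψconv.2 (mem_univ (0:ℝ)) (mem_univ (1:ℝ)) h01 ht.1.le (by ring)
    simp only [smul_eq_mul, mul_zero, mul_one, zero_add] at hup
    rw [hψ1eq] at hup
    nlinarith [hup, hlow']
  have hφaff : ∀ t ∈ Ioo (0:ℝ) δ, f (c t) = ψ 0 + t * L := by
    intro t ht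
    rw [← max_eq_right (hUS t ht).le]
    exact haff t ht
  -- derivative of f ∘ c is constant L on the interval
  have hDconst : ∀ t ∈ Ioo (0:ℝ) δ, fderiv ℝ f (c t) v = L := by
    intro t ht
    have h2 : (fun s : ℝ => ψ 0 + s * L) =ᶠ[𝓝 t] (fun s => f (c s)) := by
      filter_upwards [isOpen_Ioo.mem_nhds ht] with s hs
      exact (hφaff s hs).symm
    have h3 : HasDerivAt (fun s : ℝ => ψ 0 + s * L) (fderiv ℝ f (c t) v) t :=
      (hφd t).congr_of_eventuallyEq h2
    have h4 : HasDerivAt (fun s : ℝ => ψ 0 + s * L) L t := by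
      simpa using ((hasDerivAt_id t).mul_const L).const_add (ψ 0)
    exact h3.unique h4
  -- second derivative at the midpoint
  set t0 := δ / 2 with ht0_def
  have ht0 : t0 ∈ Ioo (0:ℝ) δ := ⟨half_pos hδ0, half_lt_self hδ0⟩
  have hDd : HasDerivAt (fun t => fderiv ℝ f (c t) v)
      (fderiv ℝ (fderiv ℝ f) (c t0) v v) t0 := by
    have h1 : HasDerivAt (fun t => fderiv ℝ f (c t))
        (fderiv ℝ (fderiv ℝ f) (c t0) v) t0 :=
      (hG (c t0)).hasFDerivAt.comp_hasDerivAt t0 (hcd t0)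
    have := h1.clm_apply (hasDerivAt_const t0 v)
    simpa using this
  have h6 : (fun _ : ℝ => L) =ᶠ[𝓝 t0] (fun t => fderiv ℝ f (c t) v) := by
    filter_upwards [isOpen_Ioo.mem_nhds ht0] with s hs
    exact (hDconst s hs).symm
  have h7 : HasDerivAt (fun _ : ℝ => L) (fderiv ℝ (fderiv ℝ f) (c t0) v v) t0 :=
    hDd.congr_of_eventuallyEq h6
  have h8 : fderiv ℝ (fderiv ℝ f) (c t0) v v = 0 := h7.unique (hasDerivAt_const t0 L)
  have h9 := hhess (c t0) (hUS t0 ht0) v hv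
  linarith
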